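/- arXiv:2004.05718 — 3 statements merged into one kernel-verified Lean document; each statement's English description precedes it below -/
import Mathlib

section
/- A multiset of n real numbers is uniquely determined by its power sums p₁,...,pₙ: if R and R' are multisets of size n over ℝ with ∑_{r∈R} r^k = ∑_{r∈R'} r^k for all k = 1,...,n, then R = R'. -/
open Polynomial Finset

/-- Newton's identity for multisets of reals. -/
lemma newton_multiset (S : Multiset ℝ) (k : ℕ) :
    (k : ℝ) * S.esymm k = (-1 : ℝ) ^ (k + 1) *
      ∑ a ∈ Finset.HasAntidiagonal.antidiagonal k with a.1 < k,
        (-1 : ℝ) ^ a.1 * S.esymm a.1 * (S.map (fun r => r ^ a.2)).sum := by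
  induction S using Quotient.inductionOn with
  | h l =>
    set f : Fin l.length → ℝ := l.get with hf
    have hS : (Finset.univ.val.map f) = (l : Multiset ℝ) := by
      have : (Finset.univ : Finset (Fin l.length)).val.map f = ((List.finRange l.length).map f : Multiset ℝ) := by
        rfl
      rw [this, ← List.ofFn_eq_map, List.ofFn_get]
    have key := congrArg (MvPolynomial.aeval f) (MvPolynomial.mul_esymm_eq_sum (Fin l.length) ℝ k)
    have hesymm : ∀ m : ℕ, MvPolynomial.aeval f (MvPolynomial.esymm (Fin l.length) ℝ m)
        = (l : Multiset ℝ).esymm m := by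
      intro m
      rw [MvPolynomial.aeval_esymm_eq_multiset_esymm, hS]
    have hpsum : ∀ m : ℕ, MvPolynomial.aeval f (MvPolynomial.psum (Fin l.length) ℝ m)
        = ((l : Multiset ℝ).map (fun r => r ^ m)).sum := by
      intro m
      rw [← hS, MvPolynomial.psum, map_sum]
      simp [Multiset.map_map, Finset.sum, Function.comp_def]
    simp only [map_mul, map_sum, map_pow, map_natCast, map_neg, map_one, hesymm, hpsum] at key
    exact key

lemma esymm_eq_of_power_sums (n : ℕ) (R R' : Multiset ℝ)
    (hR : Multiset.card R = n) (hR' : Multiset.card R' = n)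
    (h : ∀ k, 1 ≤ k → k ≤ n →
      (R.map (fun r => r ^ k)).sum = (R'.map (fun r => r ^ k)).sum) :
    ∀ k, k ≤ n → R.esymm k = R'.esymm k := by
  intro k
  induction k using Nat.strong_induction_on with
  | _ k ih =>
    intro hkn
    rcases Nat.eq_zero_or_pos k with rfl | hk
    · simp [Multiset.esymm, Multiset.powersetCard_zero_left]
    · have hN := newton_multiset R k
      have hN' := newton_multiset R' k
      have hsum : ∑ a ∈ Finset.HasAntidiagonal.antidiagonal k with a.1 < k,
            (-1 : ℝ) ^ a.1 * R.esymm a.1 * (R.map (fun r => r ^ a.2)).sum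
          = ∑ a ∈ Finset.HasAntidiagonal.antidiagonal k with a.1 < k,
            (-1 : ℝ) ^ a.1 * R'.esymm a.1 * (R'.map (fun r => r ^ a.2)).sum := by
        refine Finset.sum_congr rfl ?_
        intro a ha
        simp only [Finset.mem_filter, Finset.HasAntidiagonal.mem_antidiagonal] at ha
        have h1 : a.1 < k := ha.2
        have h2 : 1 ≤ a.2 := by omega
        have h3 : a.2 ≤ n := by omega
        rw [ih a.1 h1 (by omega), h a.2 h2 h3]
      have : (k : ℝ) * R.esymm k = (k : ℝ) * R'.esymm k := by
        rw [hN, hN', hsum]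
      exact mul_left_cancel₀ (by exact_mod_cast hk.ne') this

/-- a multiset of `n` reals is uniquely determined by its power
sums `p₁,...,pₙ`. -/
theorem power_sums_determine_multiset (n : ℕ) (R R' : Multiset ℝ)
    (hR : Multiset.card R = n) (hR' : Multiset.card R' = n)
    (h : ∀ k, 1 ≤ k → k ≤ n →
      (R.map (fun r => r ^ k)).sum = (R'.map (fun r => r ^ k)).sum) :
    R = R' := by
  have hesymm := esymm_eq_of_power_sums n R R' hR hR' h
  have hprod : (R.map fun r => X + C r).prod = (R'.map fun r => X + C r).prod := by
    rw [Multiset.prod_X_add_C_eq_sum_esymm, Multiset.prod_X_add_C_eq_sum_esymm, hR, hR']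
    refine Finset.sum_congr rfl ?_
    intro j hj
    rw [hesymm j (by simpa using Nat.lt_succ_iff.mp (Finset.mem_range.mp hj))]
  have hconv : ∀ S : Multiset ℝ,
      ((S.map Neg.neg).map fun a => X - C a).prod = (S.map fun r => X + C r).prod := by
    intro S
    rw [Multiset.map_map]
    congr 1
    apply Multiset.map_congr rfl
    intro r _
    simp [sub_neg_eq_add]
  have hroots : R.map Neg.neg = R'.map Neg.neg := by
    have := congrArg Polynomial.roots ((hconv R).trans (hprod.trans (hconv R').symm))
    rwa [Polynomial.roots_multiset_prod_X_sub_C, Polynomial.roots_multiset_prod_X_sub_C] at this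
  exact Multiset.map_injective neg_injective hroots
end

section
/- The mean aggregator together with any injective degree scaler determines cardinality and mean: let s : ℕ → ℝ be injective with s(i) > 0 for all i ≤ N, let γ = min{s(i)/s(j) : i,j ∈ [0,N], s(i) ≥ s(j)} (so γ > 1), and let K > 1/(γ−1). If X' and X'' are nonempty multisets of size at most N whose elements, under a fixed function f with range in [K, K+1], satisfy s(|X'|)·mean_{x∈X'} f(x) = s(|X''|)·mean_{x∈X''} f(x), then |X'| = |X''|. -/
/-- mean aggregation scaled by an injective positive function of the
cardinality determines the cardinality. Here `γ` is the minimal ratio between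
distinct values of `s` on `{0,...,N}` (so `γ ≤ s i / s j` whenever
`s j ≤ s i`, `i ≠ j`, and `γ > 1`), `K > 1/(γ-1)`, and `f` takes values in
`[K, K+1]`. -/
theorem scaled_mean_determines_cardinality {χ : Type*} (N : ℕ) (s : ℕ → ℝ)
    (hs : Function.Injective s) (hpos : ∀ i ≤ N, 0 < s i)
    (γ : ℝ) (hγ1 : 1 < γ)
    (hγ : ∀ i j, i ≤ N → j ≤ N → i ≠ j → s j ≤ s i → γ ≤ s i / s j)
    (K : ℝ) (hK : 1 / (γ - 1) < K)
    (f : χ → ℝ) (hf : ∀ x, f x ∈ Set.Icc K (K + 1))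
    (X' X'' : Multiset χ) (hX'0 : X' ≠ 0) (hX''0 : X'' ≠ 0)
    (hX' : Multiset.card X' ≤ N) (hX'' : Multiset.card X'' ≤ N)
    (h : s (Multiset.card X') * ((X'.map f).sum / Multiset.card X') =
         s (Multiset.card X'') * ((X''.map f).sum / Multiset.card X'')) :
    Multiset.card X' = Multiset.card X'' := by
  have hγ0 : 0 < γ - 1 := by linarith
  have hK0 : 0 < K := lt_trans (by positivity) hK
  have hKγ : K + 1 < γ * K := by
    have : 1 < K * (γ - 1) := by
      rw [div_lt_iff₀ hγ0] at hK; linarith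
    nlinarith
  have hmean : ∀ (X : Multiset χ), X ≠ 0 →
      (X.map f).sum / Multiset.card X ∈ Set.Icc K (K + 1) := by
    intro X hX0
    have hc : 0 < (Multiset.card X : ℝ) := by
      exact_mod_cast Multiset.card_pos.mpr hX0
    have hlo : (Multiset.card X : ℝ) * K ≤ (X.map f).sum := by
      have := Multiset.card_nsmul_le_sum (s := X.map f) (a := K) ?_
      · simpa [nsmul_eq_mul, mul_add] using this
      · intro x hx
        obtain ⟨y, _, rfl⟩ := Multiset.mem_map.mp hx
        exact (hf y).1
    have hhi : (X.map f).sum ≤ (Multiset.card X : ℝ) * (K + 1) := by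
      have := Multiset.sum_le_card_nsmul (X.map f) (K + 1) ?_
      · simpa [nsmul_eq_mul, mul_add] using this
      · intro x hx
        obtain ⟨y, _, rfl⟩ := Multiset.mem_map.mp hx
        exact (hf y).2
    constructor
    · rw [le_div_iff₀ hc]; linarith
    · rw [div_le_iff₀ hc]; linarith
  by_contra hne
  set n := Multiset.card X' with hn
  set m := Multiset.card X''
  have hsn : 0 < s n := hpos n hX'
  have hsm : 0 < s m := hpos m hX''
  obtain ⟨hm1, hm2⟩ := hmean X' hX'0
  obtain ⟨hm1', hm2'⟩ := hmean X'' hX''0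
  rcases le_total (s m) (s n) with hle | hle
  · have hγle : γ ≤ s n / s m := hγ n m hX' hX'' hne hle
    have h1 : s n * K ≤ s m * (K + 1) := by
      calc s n * K ≤ s n * ((X'.map f).sum / n) := by
            exact mul_le_mul_of_nonneg_left hm1 hsn.le
        _ = s m * ((X''.map f).sum / m) := h
        _ ≤ s m * (K + 1) := mul_le_mul_of_nonneg_left hm2' hsm.le
    have h2 : γ * (s m * K) ≤ s n * K := by
      rw [le_div_iff₀ hsm] at hγle
      nlinarith
    nlinarith
  · have hγle : γ ≤ s m / s n := hγ m n hX'' hX' (Ne.symm hne) hle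
    have h1 : s m * K ≤ s n * (K + 1) := by
      calc s m * K ≤ s m * ((X''.map f).sum / m) := by
            exact mul_le_mul_of_nonneg_left hm1' hsm.le
        _ = s n * ((X'.map f).sum / n) := h.symm
        _ ≤ s n * (K + 1) := mul_le_mul_of_nonneg_left hm2 hsn.le
    have h2 : γ * (s n * K) ≤ s m * K := by
      rw [le_div_iff₀ hsn] at hγle
      nlinarith
    nlinarith
end

section
/- Scaled-mean injectivity on countable bounded multisets: let χ be a countable set, Z : χ → ℕ⁺ injective, N ∈ ℕ with all multiset sizes strictly below N, s : ℕ → ℝ injective with positive values on [0,N], and K > 1/(γ−1) with γ as the minimal ratio >1 between distinct values of s. Define f(x) = N^{−Z(x)} + K and h(X) = s(|X|) · (1/|X|) ∑_{x∈X} f(x). Then h is injective on the set of nonempty multisets over χ of size less than N. -/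
open Multiset

private lemma msum_nonneg (s : Multiset ℝ) (h : ∀ x ∈ s, 0 ≤ x) : 0 ≤ s.sum := by
  induction s using Multiset.induction_on with
  | empty => simp
  | cons a t ih =>
    simp only [Multiset.sum_cons]
    have := h a (Multiset.mem_cons_self a t)
    have := ih (fun x hx => h x (Multiset.mem_cons_of_mem hx))
    linarith

private lemma msum_pos (s : Multiset ℝ) (h : ∀ x ∈ s, 0 < x) (hs : s ≠ 0) : 0 < s.sum := by
  rcases Multiset.exists_mem_of_ne_zero hs with ⟨a, ha⟩
  rcases Multiset.exists_cons_of_mem ha with ⟨t, rfl⟩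
  simp only [Multiset.sum_cons]
  have h1 := h a (Multiset.mem_cons_self a t)
  have h2 := msum_nonneg t (fun x hx => le_of_lt (h x (Multiset.mem_cons_of_mem hx)))
  linarith

private lemma sub_one_sum (C : Multiset ℕ) (hC : ∀ a ∈ C, 1 ≤ a) :
    C.sum = (C.map (fun a => a - 1)).sum + Multiset.card C := by
  induction C using Multiset.induction_on with
  | empty => simp
  | cons a t ih =>
    have ha := hC a (Multiset.mem_cons_self a t)
    have ht := ih (fun x hx => hC x (Multiset.mem_cons_of_mem hx))
    simp only [Multiset.sum_cons, Multiset.map_cons, Multiset.card_cons]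
    omega

/-- Key digit-uniqueness lemma: sums of `N^{-a}` with bounded multiplicities
determine the multiset. -/
private lemma digit_multiset_eq (N : ℕ) (hN : 2 ≤ N) :
    ∀ n : ℕ, ∀ A B : Multiset ℕ, A.sum = n →
      (∀ a ∈ A, 1 ≤ a) → (∀ b ∈ B, 1 ≤ b) →
      Multiset.card A < N → Multiset.card B < N →
      (A.map (fun a : ℕ => (N : ℝ) ^ (-(a : ℤ)))).sum
        = (B.map (fun a : ℕ => (N : ℝ) ^ (-(a : ℤ)))).sum →
      A = B := by
  have hN0 : (0:ℝ) < (N:ℝ) := by positivity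
  have hN1 : (1:ℝ) < (N:ℝ) := by exact_mod_cast Nat.lt_of_lt_of_le one_lt_two hN
  have hNne : (N:ℝ) ≠ 0 := ne_of_gt hN0
  have hterm_pos : ∀ a : ℕ, 0 < (N:ℝ) ^ (-(a:ℤ)) := fun a => zpow_pos hN0 _
  intro n
  induction n using Nat.strong_induction_on with
  | _ n ih =>
    intro A B hAsum hA hB hcA hcB hsum
    by_cases hA0 : A = 0
    · subst hA0
      by_contra hB0
      have hB0' : B ≠ 0 := fun h => hB0 h.symm
      have : 0 < (B.map (fun a : ℕ => (N : ℝ) ^ (-(a : ℤ)))).sum := by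
        apply msum_pos
        · intro x hx
          rcases Multiset.mem_map.1 hx with ⟨b, _, rfl⟩
          exact hterm_pos b
        · simpa using hB0'
      rw [← hsum] at this
      simp at this
    -- main case
    classical
    · set g : ℕ → ℝ := fun a => (N : ℝ) ^ (-(a : ℤ)) with hg
      -- decomposition of a multiset
      have decomp : ∀ C : Multiset ℕ,
          C = Multiset.replicate (C.count 1) 1 + C.filter (fun a => ¬ a = 1) := by
        intro C
        conv_lhs => rw [← Multiset.filter_add_not (fun a => a = 1) C]
        rw [Multiset.filter_eq']
      have sum_decomp : ∀ C : Multiset ℕ,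
          (C.map g).sum = (C.count 1 : ℝ) * (N:ℝ)⁻¹
            + ((C.filter (fun a => ¬ a = 1)).map g).sum := by
        intro C
        conv_lhs => rw [decomp C]
        rw [Multiset.map_add, Multiset.sum_add, Multiset.map_replicate,
          Multiset.sum_replicate, nsmul_eq_mul]
        congr 2
        simp [hg]
      -- bound on the remainder
      have rem_bound : ∀ C : Multiset ℕ, (∀ a ∈ C, 1 ≤ a) → Multiset.card C < N →
          ((C.filter (fun a => ¬ a = 1)).map g).sum ≤ ((N:ℝ) - 1) * ((N:ℝ)^2)⁻¹ := by
        intro C hC hcC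
        have hle : ((C.filter (fun a => ¬ a = 1)).map g).sum
            ≤ (Multiset.card ((C.filter (fun a => ¬ a = 1)).map g)) • ((N:ℝ)^2)⁻¹ := by
          apply Multiset.sum_le_card_nsmul
          intro x hx
          rcases Multiset.mem_map.1 hx with ⟨a, ha, rfl⟩
          have ha1 : a ∈ C := Multiset.mem_of_mem_filter ha
          have hane : ¬ a = 1 := (Multiset.mem_filter.1 ha).2
          have ha1' : 1 ≤ a := hC a ha1
          have ha2 : 2 ≤ a := by omega
          have : (N:ℝ) ^ (-(a:ℤ)) ≤ (N:ℝ) ^ (-(2:ℤ)) := by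
            apply zpow_le_zpow_right₀ (le_of_lt hN1)
            omega
          calc g a ≤ (N:ℝ) ^ (-(2:ℤ)) := this
            _ = ((N:ℝ)^2)⁻¹ := by
                rw [zpow_neg, show ((2:ℤ)) = ((2:ℕ):ℤ) by norm_num, zpow_natCast]
        have hcard : (Multiset.card ((C.filter (fun a => ¬ a = 1)).map g) : ℝ) ≤ (N:ℝ) - 1 := by
          rw [Multiset.card_map]
          have h1 : Multiset.card (C.filter (fun a => ¬ a = 1)) ≤ Multiset.card C :=
            Multiset.card_le_card (Multiset.filter_le _ _)
          have : Multiset.card (C.filter (fun a => ¬ a = 1)) ≤ N - 1 := by omega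
          have hN1' : 1 ≤ N := by omega
          calc (Multiset.card (C.filter (fun a => ¬ a = 1)) : ℝ) ≤ ((N - 1 : ℕ) : ℝ) := by
                exact_mod_cast this
            _ = (N:ℝ) - 1 := by
                push_cast [Nat.cast_sub hN1']
                ring
        calc ((C.filter (fun a => ¬ a = 1)).map g).sum
            ≤ (Multiset.card ((C.filter (fun a => ¬ a = 1)).map g)) • ((N:ℝ)^2)⁻¹ := hle
          _ = (Multiset.card ((C.filter (fun a => ¬ a = 1)).map g) : ℝ) * ((N:ℝ)^2)⁻¹ := by
              rw [nsmul_eq_mul]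
          _ ≤ ((N:ℝ) - 1) * ((N:ℝ)^2)⁻¹ := by
              apply mul_le_mul_of_nonneg_right hcard
              positivity
      have rem_nonneg : ∀ C : Multiset ℕ,
          0 ≤ ((C.filter (fun a => ¬ a = 1)).map g).sum := by
        intro C
        apply msum_nonneg
        intro x hx
        rcases Multiset.mem_map.1 hx with ⟨a, _, rfl⟩
        exact le_of_lt (hterm_pos a)
      set c := A.count 1
      set d := B.count 1
      set RA := ((A.filter (fun a => ¬ a = 1)).map g).sum with hRA
      set RB := ((B.filter (fun a => ¬ a = 1)).map g).sum with hRB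
      have hSA : (A.map g).sum = (c:ℝ) * (N:ℝ)⁻¹ + RA := sum_decomp A
      have hSB : (B.map g).sum = (d:ℝ) * (N:ℝ)⁻¹ + RB := sum_decomp B
      have hRAb : RA ≤ ((N:ℝ) - 1) * ((N:ℝ)^2)⁻¹ := rem_bound A hA hcA
      have hRBb : RB ≤ ((N:ℝ) - 1) * ((N:ℝ)^2)⁻¹ := rem_bound B hB hcB
      have hRA0 : 0 ≤ RA := rem_nonneg A
      have hRB0 : 0 ≤ RB := rem_nonneg B
      -- multiply equation by N
      have heqN : (c:ℝ) + (N:ℝ) * RA = (d:ℝ) + (N:ℝ) * RB := by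
        have := hsum
        rw [hSA, hSB] at this
        have h2 : (N:ℝ) * ((c:ℝ) * (N:ℝ)⁻¹ + RA) = (N:ℝ) * ((d:ℝ) * (N:ℝ)⁻¹ + RB) := by
          rw [this]
        field_simp at h2
        linarith
      have hNRlt1 : ∀ R : ℝ, R ≤ ((N:ℝ) - 1) * ((N:ℝ)^2)⁻¹ → (N:ℝ) * R < 1 := by
        intro R hR
        have : (N:ℝ) * R ≤ (N:ℝ) * (((N:ℝ) - 1) * ((N:ℝ)^2)⁻¹) :=
          mul_le_mul_of_nonneg_left hR (le_of_lt hN0)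
        have heq : (N:ℝ) * (((N:ℝ) - 1) * ((N:ℝ)^2)⁻¹) = ((N:ℝ) - 1) / (N:ℝ) := by
          field_simp
        rw [heq] at this
        have : ((N:ℝ) - 1) / (N:ℝ) < 1 := by
          rw [div_lt_one hN0]; linarith
        linarith [mul_le_mul_of_nonneg_left hR (le_of_lt hN0), heq ▸
          (mul_le_mul_of_nonneg_left hR (le_of_lt hN0))]
      have hNRA : (N:ℝ) * RA < 1 := hNRlt1 RA hRAb
      have hNRB : (N:ℝ) * RB < 1 := hNRlt1 RB hRBb
      have hNRA0 : 0 ≤ (N:ℝ) * RA := by positivity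
      have hNRB0 : 0 ≤ (N:ℝ) * RB := by positivity
      have hcd : c = d := by
        have h1 : (c:ℝ) < (d:ℝ) + 1 := by linarith
        have h2 : (d:ℝ) < (c:ℝ) + 1 := by linarith
        have : c < d + 1 := by exact_mod_cast h1
        have : d < c + 1 := by exact_mod_cast h2
        omega
      have hRAB : RA = RB := by
        rw [hcd] at heqN
        have : (N:ℝ) * RA = (N:ℝ) * RB := by linarith
        exact mul_left_cancel₀ hNne this
      -- shifted multisets
      set FA := A.filter (fun a => ¬ a = 1) with hFA
      set FB := B.filter (fun a => ¬ a = 1) with hFB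
      set A' := FA.map (fun a => a - 1) with hA'
      set B' := FB.map (fun a => a - 1) with hB'
      have hFA2 : ∀ a ∈ FA, 2 ≤ a := by
        intro a ha
        have := hA a (Multiset.mem_of_mem_filter ha)
        have := (Multiset.mem_filter.1 ha).2
        omega
      have hFB2 : ∀ b ∈ FB, 2 ≤ b := by
        intro b hb
        have := hB b (Multiset.mem_of_mem_filter hb)
        have := (Multiset.mem_filter.1 hb).2
        omega
      have shift_sum : ∀ (C : Multiset ℕ), (∀ a ∈ C, 2 ≤ a) →
          ((C.map (fun a => a - 1)).map g).sum = (N:ℝ) * (C.map g).sum := by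
        intro C hC
        rw [Multiset.map_map]
        have : (C.map (g ∘ fun a => a - 1)) = C.map (fun a => (N:ℝ) * g a) := by
          apply Multiset.map_congr rfl
          intro a ha
          have h2 : 2 ≤ a := hC a ha
          simp only [Function.comp_apply, hg]
          have hcast : ((a - 1 : ℕ) : ℤ) = (a : ℤ) - 1 := by
            push_cast [Nat.cast_sub (by omega : 1 ≤ a)]; ring
          rw [hcast]
          rw [show -((a:ℤ) - 1) = 1 + -(a:ℤ) by ring, zpow_add₀ hNne, zpow_one]
        rw [this, Multiset.sum_map_mul_left]
      have hsum' : (A'.map g).sum = (B'.map g).sum := by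
        rw [hA', hB', shift_sum FA hFA2, shift_sum FB hFB2]
        rw [← hRA, ← hRB, hRAB]
      have hA'1 : ∀ a ∈ A', 1 ≤ a := by
        intro a ha
        rcases Multiset.mem_map.1 ha with ⟨x, hx, rfl⟩
        have := hFA2 x hx; omega
      have hB'1 : ∀ b ∈ B', 1 ≤ b := by
        intro b hb
        rcases Multiset.mem_map.1 hb with ⟨x, hx, rfl⟩
        have := hFB2 x hx; omega
      have hcA' : Multiset.card A' < N := by
        rw [hA', Multiset.card_map]
        exact lt_of_le_of_lt (Multiset.card_le_card (Multiset.filter_le _ _)) hcA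
      have hcB' : Multiset.card B' < N := by
        rw [hB', Multiset.card_map]
        exact lt_of_le_of_lt (Multiset.card_le_card (Multiset.filter_le _ _)) hcB
      -- measure decreases
      have hFAsum : FA.sum = A'.sum + Multiset.card FA := by
        rw [hA']
        exact sub_one_sum FA (fun a ha => by have := hFA2 a ha; omega)
      have hAsplit : A.sum = c + FA.sum := by
        conv_lhs => rw [decomp A]
        rw [Multiset.sum_add, Multiset.sum_replicate]
        simp [hFA]
        rfl
      have hcardA : 0 < Multiset.card A := Multiset.card_pos.2 hA0
      have hcardsplit : Multiset.card A = c + Multiset.card FA := by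
        conv_lhs => rw [decomp A]
        rw [Multiset.card_add, Multiset.card_replicate]
      have hmeas : A'.sum < n := by
        rw [← hAsum, hAsplit, hFAsum]; omega
      have hAB' : A' = B' := ih A'.sum hmeas A' B' rfl hA'1 hB'1 hcA' hcB' hsum'
      -- reconstruction
      have recon : ∀ C : Multiset ℕ, (∀ a ∈ C, 2 ≤ a) →
          (C.map (fun a => a - 1)).map (fun a => a + 1) = C := by
        intro C hC
        rw [Multiset.map_map]
        have : C.map ((fun a => a + 1) ∘ fun a => a - 1) = C.map id := by
          apply Multiset.map_congr rfl
          intro a ha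
          have := hC a ha
          simp only [Function.comp_apply, id]
          omega
        rw [this, Multiset.map_id]
      have hFAB : FA = FB := by
        rw [← recon FA hFA2, ← recon FB hFB2, ← hA', ← hB', hAB']
      have e1 : A = Multiset.replicate c 1 + FA := decomp A
      have e2 : B = Multiset.replicate d 1 + FB := decomp B
      rw [e1, e2, hFAB, hcd]

/-- Theorem 2 of the paper: the mean aggregator composed with an
injective degree scaler is injective on bounded multisets of countable elements.
With `Z : χ → ℕ⁺` injective, all multiset sizes `< N`, `s` injective and positive
on `{0,...,N}`, `γ` the minimal ratio `> 1` between distinct values of `s`,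
`K > 1/(γ-1)`, `f x = N^{-Z x} + K` and
`h X = s(|X|) · (1/|X|) ∑_{x∈X} f x`, the map `h` is injective on nonempty
multisets over `χ` of size less than `N`. -/
theorem scaled_mean_injective_on_bounded_multisets {χ : Type*} [Countable χ]
    (N : ℕ) (Z : χ → ℕ) (hZinj : Function.Injective Z) (hZpos : ∀ x, 1 ≤ Z x)
    (s : ℕ → ℝ) (hs : Function.Injective s) (hpos : ∀ i ≤ N, 0 < s i)
    (γ : ℝ) (hγ1 : 1 < γ)
    (hγ : ∀ i j, i ≤ N → j ≤ N → i ≠ j → s j ≤ s i → γ ≤ s i / s j)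
    (K : ℝ) (hK : 1 / (γ - 1) < K) :
    ∀ X Y : Multiset χ, X ≠ 0 → Y ≠ 0 →
      Multiset.card X < N → Multiset.card Y < N →
      s (Multiset.card X) *
          ((X.map (fun x => (N : ℝ) ^ (-(Z x : ℤ)) + K)).sum / Multiset.card X) =
        s (Multiset.card Y) *
          ((Y.map (fun x => (N : ℝ) ^ (-(Z x : ℤ)) + K)).sum / Multiset.card Y) →
      X = Y := by
  intro X Y hX0 hY0 hcX hcY heq
  have hcX0 : 0 < Multiset.card X := Multiset.card_pos.2 hX0
  have hcY0 : 0 < Multiset.card Y := Multiset.card_pos.2 hY0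
  have hN2 : 2 ≤ N := by omega
  have hN0 : (0:ℝ) < (N:ℝ) := by positivity
  have hN1 : (1:ℝ) < (N:ℝ) := by exact_mod_cast Nat.lt_of_lt_of_le one_lt_two hN2
  have hγpos : 0 < γ - 1 := by linarith
  have hKpos : 0 < K := lt_trans (by positivity) hK
  have hKγ : (K + 1) / K < γ := by
    rw [div_lt_iff₀ hKpos]
    have : 1 < K * (γ - 1) := by
      rw [div_lt_iff₀ hγpos] at hK
      linarith
    nlinarith
  set g : χ → ℝ := fun x => (N : ℝ) ^ (-(Z x : ℤ)) with hg
  set f : χ → ℝ := fun x => (N : ℝ) ^ (-(Z x : ℤ)) + K with hf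
  -- split sums and bounds
  have hsplit : ∀ W : Multiset χ,
      (W.map f).sum = (W.map g).sum + (Multiset.card W : ℝ) * K := by
    intro W
    have : (W.map f).sum = (W.map g).sum + (W.map (fun _ => K)).sum := by
      rw [← Multiset.sum_map_add]
    rw [this, Multiset.map_const', Multiset.sum_replicate, nsmul_eq_mul]
  have hTpos : ∀ W : Multiset χ, W ≠ 0 → 0 < (W.map g).sum := by
    intro W hW
    apply msum_pos
    · intro x hx
      rcases Multiset.mem_map.1 hx with ⟨a, _, rfl⟩
      exact zpow_pos hN0 _
    · simpa using hW
  have hTle : ∀ W : Multiset χ,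
      (W.map g).sum ≤ (Multiset.card W : ℝ) * (N:ℝ)⁻¹ := by
    intro W
    have := Multiset.sum_le_card_nsmul (W.map g) ((N:ℝ)⁻¹) ?_
    · rwa [Multiset.card_map, nsmul_eq_mul] at this
    · intro x hx
      rcases Multiset.mem_map.1 hx with ⟨a, _, rfl⟩
      have : (N:ℝ) ^ (-(Z a : ℤ)) ≤ (N:ℝ) ^ (-(1:ℤ)) := by
        apply zpow_le_zpow_right₀ (le_of_lt hN1)
        have := hZpos a
        omega
      simpa [hg, zpow_neg] using this
  have hbounds : ∀ W : Multiset χ, W ≠ 0 → Multiset.card W < N →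
      K < (W.map f).sum / (Multiset.card W : ℝ) ∧
        (W.map f).sum / (Multiset.card W : ℝ) < K + 1 := by
    intro W hW hcW
    have hc0 : 0 < Multiset.card W := Multiset.card_pos.2 hW
    have hc0' : (0:ℝ) < (Multiset.card W : ℝ) := by exact_mod_cast hc0
    have hm : (W.map f).sum / (Multiset.card W : ℝ)
        = (W.map g).sum / (Multiset.card W : ℝ) + K := by
      rw [hsplit W]
      field_simp
    constructor
    · rw [hm]
      have := hTpos W hW
      have : 0 < (W.map g).sum / (Multiset.card W : ℝ) := by positivity
      linarith
    · rw [hm]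
      have h1 : (W.map g).sum / (Multiset.card W : ℝ) ≤ (N:ℝ)⁻¹ := by
        rw [div_le_iff₀ hc0', mul_comm]
        exact hTle W
      have h2 : (N:ℝ)⁻¹ < 1 := by
        rw [inv_lt_one_iff₀]; right; exact hN1
      linarith
  -- equal cardinalities
  set mX := (X.map f).sum / (Multiset.card X : ℝ) with hmX
  set mY := (Y.map f).sum / (Multiset.card Y : ℝ) with hmY
  have hbX := hbounds X hX0 hcX
  have hbY := hbounds Y hY0 hcY
  have hcard : Multiset.card X = Multiset.card Y := by
    by_contra hne
    have hsne : s (Multiset.card X) ≠ s (Multiset.card Y) := fun h => hne (hs h)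
    have hsX : 0 < s (Multiset.card X) := hpos _ (le_of_lt hcX)
    have hsY : 0 < s (Multiset.card Y) := hpos _ (le_of_lt hcY)
    rcases le_total (s (Multiset.card Y)) (s (Multiset.card X)) with hle | hle
    · have hγle : γ ≤ s (Multiset.card X) / s (Multiset.card Y) :=
        hγ _ _ (le_of_lt hcX) (le_of_lt hcY) hne hle
      have hratio : s (Multiset.card X) / s (Multiset.card Y) = mY / mX := by
        rw [div_eq_div_iff (ne_of_gt hsY) (ne_of_gt (lt_trans hKpos hbX.1))]
        rw [mul_comm mY (s (Multiset.card Y))]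
        exact heq
      have : mY / mX < γ := by
        have h1 : mY / mX < (K + 1) / K := by
          apply div_lt_div₀ hbY.2 (le_of_lt hbX.1) (by linarith) hKpos
        linarith
      rw [hratio] at hγle
      linarith
    · have hγle : γ ≤ s (Multiset.card Y) / s (Multiset.card X) :=
        hγ _ _ (le_of_lt hcY) (le_of_lt hcX) (Ne.symm hne) hle
      have hratio : s (Multiset.card Y) / s (Multiset.card X) = mX / mY := by
        rw [div_eq_div_iff (ne_of_gt hsX) (ne_of_gt (lt_trans hKpos hbY.1))]
        rw [mul_comm mX (s (Multiset.card X))]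
        exact heq.symm
      have : mX / mY < γ := by
        have h1 : mX / mY < (K + 1) / K := by
          apply div_lt_div₀ hbX.2 (le_of_lt hbY.1) (by linarith) hKpos
        linarith
      rw [hratio] at hγle
      linarith
  -- equal means, equal g-sums
  have hsX : 0 < s (Multiset.card X) := hpos _ (le_of_lt hcX)
  have hmeq : mX = mY := by
    rw [hcard] at heq
    exact mul_left_cancel₀ (ne_of_gt (hpos _ (le_of_lt hcY))) heq
  have hTXY : (X.map g).sum = (Y.map g).sum := by
    have hc0' : (0:ℝ) < (Multiset.card X : ℝ) := by exact_mod_cast hcX0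
    have := hmeq
    rw [hmX, hmY, hsplit X, hsplit Y, ← hcard] at this
    rw [div_eq_div_iff (ne_of_gt hc0') (ne_of_gt hc0')] at this
    have h2 : ((X.map g).sum + (Multiset.card X : ℝ) * K)
        = ((Y.map g).sum + (Multiset.card X : ℝ) * K) := by
      exact mul_right_cancel₀ (ne_of_gt hc0') this
    linarith
  -- digit lemma
  have hmapeq : X.map Z = Y.map Z := by
    apply digit_multiset_eq N hN2 ((X.map Z).sum) _ _ rfl
    · intro a ha
      rcases Multiset.mem_map.1 ha with ⟨x, _, rfl⟩
      exact hZpos x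
    · intro b hb
      rcases Multiset.mem_map.1 hb with ⟨x, _, rfl⟩
      exact hZpos x
    · rwa [Multiset.card_map]
    · rwa [Multiset.card_map]
    · rw [Multiset.map_map, Multiset.map_map]
      exact hTXY
  exact Multiset.map_injective hZinj hmapeq
end
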